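/- Suppose 𝐞 = (e₁,e₂) is a wonderful nilpotent pair in 𝔤 with characteristic 𝐡 = (h₁,h₂). Then: (1) lim_{e₁} 𝔥 = 𝔷_𝔤(e₁,h₂)_ℙ and lim_{e₂} 𝔥 = 𝔷_𝔤(e₂,h₁)_ℙ; (2) lim_{e₁} 𝔷_𝔤(e₂,h₁,h₂) = 𝔷_𝔤(e₂,e₁,h₂)_ℙ and lim_{e₂} 𝔷_𝔤(e₁,h₁,h₂) = 𝔷_𝔤(e₁,e₂,h₁)_ℙ. Here subscript ℙ denotes the sum of the graded components with nonnegative eigenvalue (with respect to h₁ in the first equality of each item and h₂ in the second). -/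

import Mathlib

/-!
Common definitions for formalizing "Nilpotent pairs in semisimple Lie algebras
and their characteristics" (D. Panyushev).
-/

open LieAlgebra Module Submodule

section Defs

variable (𝕜 : Type*) [Field 𝕜] [IsAlgClosed 𝕜] [CharZero 𝕜]
variable (L : Type*) [LieRing L] [LieAlgebra 𝕜 L]

/-- The centralizer `𝔷_𝔤(S)` of a set `S ⊆ 𝔤`, as a submodule. -/
def cent (S : Set L) : Submodule 𝕜 L where
  carrier := {x | ∀ s ∈ S, ⁅s, x⁆ = 0}
  add_mem' := fun {a b} ha hb s hs => by rw [lie_add, ha s hs, hb s hs, add_zero]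
  zero_mem' := fun s _ => lie_zero s
  smul_mem' := fun c x hx s hs => by rw [lie_smul, hx s hs, smul_zero]

/-- The (truncated) exponential of an endomorphism; for a nilpotent endomorphism of a
module of finite rank this is the usual exponential. -/
noncomputable def expEnd (f : Module.End 𝕜 L) : Module.End 𝕜 L :=
  ∑ i ∈ Finset.range (Module.finrank 𝕜 L + 1), (i.factorial : 𝕜)⁻¹ • f ^ i

/-- The adjoint group `G` of `𝔤`: the group of automorphisms generated by the
exponentials of nilpotent inner derivations. -/
noncomputable def adjointGroup : Subgroup (L ≃ₗ[𝕜] L) :=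
  Subgroup.closure
    {φ | ∃ x : L, IsNilpotent (ad 𝕜 L x) ∧ (φ : L →ₗ[𝕜] L) = expEnd 𝕜 L (ad 𝕜 L x)}

/-- A nilpotent pair: `[e₁,e₂] = 0` and the pair can be independently rescaled by the
adjoint group. -/
def IsNilpotentPair (e₁ e₂ : L) : Prop :=
  ⁅e₁, e₂⁆ = 0 ∧ ∀ t₁ t₂ : 𝕜, t₁ ≠ 0 → t₂ ≠ 0 →
    ∃ g ∈ adjointGroup 𝕜 L, g e₁ = t₁ • e₁ ∧ g e₂ = t₂ • e₂

/-- A characteristic of the pair `(e₁, e₂)`: a pair of semisimple elements `(h₁, h₂)`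
with `[h₁,h₂] = 0`, `[hᵢ,eⱼ] = δᵢⱼ eⱼ`, and `h₁, h₂ ⊥ 𝔷_𝔤(𝐞)` w.r.t. the Killing form. -/
def IsCharacteristic (e₁ e₂ h₁ h₂ : L) : Prop :=
  (ad 𝕜 L h₁).IsSemisimple ∧ (ad 𝕜 L h₂).IsSemisimple ∧
  ⁅h₁, h₂⁆ = 0 ∧
  ⁅h₁, e₁⁆ = e₁ ∧ ⁅h₂, e₂⁆ = e₂ ∧ ⁅h₁, e₂⁆ = 0 ∧ ⁅h₂, e₁⁆ = 0 ∧
  ∀ z ∈ cent 𝕜 L {e₁, e₂}, killingForm 𝕜 L z h₁ = 0 ∧ killingForm 𝕜 L z h₂ = 0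

/-- The bi-graded component `𝔤_{p,q}` determined by the characteristic `(h₁, h₂)`. -/
noncomputable def gpq (h₁ h₂ : L) (p q : ℚ) : Submodule 𝕜 L :=
  Module.End.eigenspace (ad 𝕜 L h₁) (p : 𝕜) ⊓ Module.End.eigenspace (ad 𝕜 L h₂) (q : 𝕜)

/-- The graded component `𝔤_p` determined by a semisimple element `h`. -/
noncomputable def gp (h : L) (p : ℚ) : Submodule 𝕜 L :=
  Module.End.eigenspace (ad 𝕜 L h) (p : 𝕜)

/-- `M(i,j) = {x ∈ M : (ad e₁)^{i+1} x = 0, (ad e₂)^{j+1} x = 0}`. -/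
noncomputable def Mij (M : Submodule 𝕜 L) (e₁ e₂ : L) (i j : ℕ) : Submodule 𝕜 L :=
  M ⊓ LinearMap.ker ((ad 𝕜 L e₁) ^ (i + 1)) ⊓ LinearMap.ker ((ad 𝕜 L e₂) ^ (j + 1))

/-- `lim_e M = Σ_{i ≥ 0} (ad e)^i M(i,*)`. -/
noncomputable def limE (e : L) (M : Submodule 𝕜 L) : Submodule 𝕜 L :=
  ⨆ i : ℕ, Submodule.map ((ad 𝕜 L e) ^ i) (M ⊓ LinearMap.ker ((ad 𝕜 L e) ^ (i + 1)))

/-- `lim_𝐞 M = Σ_{i,j ≥ 0} (ad e₁)^i (ad e₂)^j M(i,j)`. -/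
noncomputable def limPair (e₁ e₂ : L) (M : Submodule 𝕜 L) : Submodule 𝕜 L :=
  ⨆ i : ℕ, ⨆ j : ℕ,
    Submodule.map ((ad 𝕜 L e₁) ^ i * (ad 𝕜 L e₂) ^ j) (Mij 𝕜 L M e₁ e₂ i j)

/-- A nilpotent pair with characteristic `(h₁,h₂)` is wonderful if
`(ad e₁)^i (ad e₂)^j 𝔥(i,j) = 𝔷_𝔤(𝐞)_{i,j}` for all `i,j ≥ 0`, where `𝔥 = 𝔷_𝔤(𝐡)`. -/
noncomputable def IsWonderful (e₁ e₂ h₁ h₂ : L) : Prop :=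
  ∀ i j : ℕ,
    Submodule.map ((ad 𝕜 L e₁) ^ i * (ad 𝕜 L e₂) ^ j)
      (Mij 𝕜 L (cent 𝕜 L {h₁, h₂}) e₁ e₂ i j)
    = cent 𝕜 L {e₁, e₂} ⊓ gpq 𝕜 L h₁ h₂ i j

/-- The pair is integral if all eigenvalues of the characteristic are integers. -/
noncomputable def IsIntegralPair (h₁ h₂ : L) : Prop :=
  ∀ p q : ℚ, gpq 𝕜 L h₁ h₂ p q ≠ ⊥ → (∃ a : ℤ, p = a) ∧ (∃ b : ℤ, q = b)

end Defs

section GradedParts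

variable (𝕜 : Type*) [Field 𝕜] [IsAlgClosed 𝕜] [CharZero 𝕜]
variable (L : Type*) [LieRing L] [LieAlgebra 𝕜 L]

/-- The subscript-`ℙ` part of a subspace `N`: the sum of its intersections with the
nonnegative integral eigenspaces of `ad h`. -/
noncomputable def posPart (h : L) (N : Submodule 𝕜 L) : Submodule 𝕜 L :=
  ⨆ i : ℕ, N ⊓ gp 𝕜 L h i

/-- The subscript-`ℤ` part of a subspace `N`: the sum of its intersections with the
integral eigenspaces of `ad h`. -/
noncomputable def intPart (h : L) (N : Submodule 𝕜 L) : Submodule 𝕜 L :=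
  ⨆ i : ℤ, N ⊓ gp 𝕜 L h i

end GradedParts


section Aux

set_option linter.unusedSectionVars false

variable {𝕜 : Type*} [Field 𝕜] [IsAlgClosed 𝕜] [CharZero 𝕜]
variable {L : Type*} [LieRing L] [LieAlgebra 𝕜 L]

lemma commute_ad {x y : L} (h : ⁅x, y⁆ = 0) :
    Commute (ad 𝕜 L x) (ad 𝕜 L y) := by
  letI : LieRing (Module.End 𝕜 L) := LieRing.ofAssociativeRing
  have h2 := (ad 𝕜 L).map_lie x y
  rw [h, Ring.lie_def, map_zero] at h2
  exact sub_eq_zero.mp h2.symm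

lemma lie_ad_pow {x y : L} (h : ⁅x, y⁆ = 0) (k : ℕ) (z : L) :
    ⁅x, ((ad 𝕜 L y) ^ k) z⁆ = ((ad 𝕜 L y) ^ k) ⁅x, z⁆ := by
  have hc := (commute_ad (𝕜 := 𝕜) h).pow_right k
  rw [show ⁅x, ((ad 𝕜 L y) ^ k) z⁆ = (ad 𝕜 L x * (ad 𝕜 L y) ^ k) z from rfl,
    hc.eq, Module.End.mul_apply, ad_apply]

lemma lie_ad_pow_weight {a e : L} (hae : ⁅a, e⁆ = e) (k : ℕ) (x : L) (μ : 𝕜)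
    (hx : ⁅a, x⁆ = μ • x) :
    ⁅a, ((ad 𝕜 L e) ^ k) x⁆ = (μ + k) • ((ad 𝕜 L e) ^ k) x := by
  induction k with
  | zero => simpa using hx
  | succ k ih =>
    have h1 : ((ad 𝕜 L e) ^ (k + 1)) x = ⁅e, ((ad 𝕜 L e) ^ k) x⁆ := by
      rw [pow_succ', Module.End.mul_apply, ad_apply]
    rw [h1, leibniz_lie, hae, ih, lie_smul]
    push_cast
    module

lemma isNilpotent_ad_of_lie_eq [Module.Finite 𝕜 L] (h e : L) (hh : ⁅h, e⁆ = e) :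
    IsNilpotent (ad 𝕜 L e) := by
  classical
  set s : Module.End 𝕜 L := ad 𝕜 L h with hs
  set f : Module.End 𝕜 L := ad 𝕜 L e with hf
  have hsf : s * f = f + f * s := by
    letI : LieRing (Module.End 𝕜 L) := LieRing.ofAssociativeRing
    have h2 := (ad 𝕜 L).map_lie h e
    rw [hh, Ring.lie_def] at h2
    exact sub_eq_iff_eq_add.mp h2.symm
  have hshift : ∀ (μ : 𝕜) (k : ℕ),
      (s - (μ + 1) • 1) ^ k * f = f * (s - μ • 1) ^ k := by
    intro μ k
    have single : (s - (μ + 1) • 1) * f = f * (s - μ • 1) := by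
      rw [sub_mul, mul_sub, smul_mul_assoc, mul_smul_comm, one_mul, mul_one, hsf]
      module
    induction k with
    | zero => simp
    | succ k ih => rw [pow_succ, pow_succ, mul_assoc, single, ← mul_assoc, ih, mul_assoc]
  have hmap : ∀ (μ : 𝕜) (x : L), x ∈ s.maxGenEigenspace μ →
      f x ∈ s.maxGenEigenspace (μ + 1) := by
    intro μ x hx
    rw [Module.End.mem_maxGenEigenspace] at hx ⊢
    obtain ⟨k, hk⟩ := hx
    refine ⟨k, ?_⟩
    have := congrArg (fun (g : Module.End 𝕜 L) => g x) (hshift μ k)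
    simp only [Module.End.mul_apply] at this
    rw [this, hk, map_zero]
  have hmapn : ∀ (n : ℕ) (μ : 𝕜) (x : L), x ∈ s.maxGenEigenspace μ →
      (f ^ n) x ∈ s.maxGenEigenspace (μ + n) := by
    intro n
    induction n with
    | zero => intro μ x hx; simpa using hx
    | succ n ih =>
      intro μ x hx
      have h1 : (f ^ (n + 1)) x = f ((f ^ n) x) := by
        rw [pow_succ', Module.End.mul_apply]
      have := hmap (μ + n) _ (ih μ x hx)
      rw [h1]
      convert this using 2
      push_cast
      ring
  have Sfin : {μ : 𝕜 | s.maxGenEigenspace μ ≠ ⊥}.Finite :=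
    WellFoundedGT.finite_ne_bot_of_iSupIndep s.independent_maxGenEigenspace
  set T := Sfin.toFinset with hT
  have key : ∀ (μ : 𝕜) (x : L), x ∈ s.maxGenEigenspace μ → ∃ n : ℕ, (f ^ n) x = 0 := by
    intro μ x hx
    have : ∃ i ∈ Finset.range (T.card + 1), s.maxGenEigenspace (μ + i) = ⊥ := by
      by_contra hcon
      push_neg at hcon
      have hsub : (Finset.range (T.card + 1)).image (fun i : ℕ => μ + i) ⊆ T := by
        intro ν hν
        rw [Finset.mem_image] at hν
        obtain ⟨i, hi, rfl⟩ := hν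
        rw [hT, Set.Finite.mem_toFinset]
        exact hcon i hi
      have hcard : ((Finset.range (T.card + 1)).image (fun i : ℕ => μ + i)).card
          = T.card + 1 := by
        rw [Finset.card_image_of_injective _ (fun i j hij => by
          have : (i : 𝕜) = j := add_left_cancel hij
          exact_mod_cast this)]
        simp
      have := Finset.card_le_card hsub
      omega
    obtain ⟨i, _, hbot⟩ := this
    refine ⟨i, ?_⟩
    have := hmapn i μ x hx
    rw [hbot] at this
    simpa using this
  have htfae := (LinearMap.charpoly_nilpotent_tfae f).out 0 2
  rw [htfae]
  intro m
  have hm : m ∈ ⨆ μ : 𝕜, s.maxGenEigenspace μ := by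
    rw [Module.End.iSup_maxGenEigenspace_eq_top s]; trivial
  refine Submodule.iSup_induction _ (motive := fun x => ∃ n : ℕ, (f ^ n) x = 0) hm
    (fun μ x hx => key μ x hx) ⟨0, by simp⟩ ?_
  rintro x y ⟨n, hn⟩ ⟨n', hn'⟩
  refine ⟨n + n', ?_⟩
  have h1 : (f ^ (n + n')) x = 0 := by
    rw [add_comm, pow_add, Module.End.mul_apply, hn, map_zero]
  have h2 : (f ^ (n + n')) y = 0 := by
    rw [pow_add, Module.End.mul_apply, hn', map_zero]
  rw [map_add, h1, h2, add_zero]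

lemma mem_cent {S : Set L} {x : L} : x ∈ cent 𝕜 L S ↔ ∀ s ∈ S, ⁅s, x⁆ = 0 := Iff.rfl

lemma mem_cent_pair {a b x : L} : x ∈ cent 𝕜 L {a, b} ↔ ⁅a, x⁆ = 0 ∧ ⁅b, x⁆ = 0 := by
  simp [mem_cent]

lemma mem_cent_triple {a b c x : L} :
    x ∈ cent 𝕜 L {a, b, c} ↔ ⁅a, x⁆ = 0 ∧ ⁅b, x⁆ = 0 ∧ ⁅c, x⁆ = 0 := by
  simp [mem_cent]

lemma key_lemma (e f a b : L)
    (hef : ⁅e, f⁆ = 0) (hae : ⁅a, e⁆ = e) (hbf : ⁅b, f⁆ = f)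
    (haf : ⁅a, f⁆ = 0) (hbe : ⁅b, e⁆ = 0)
    (hfnil : IsNilpotent (ad 𝕜 L f))
    (hw : ∀ i j : ℕ, Submodule.map ((ad 𝕜 L e) ^ i * (ad 𝕜 L f) ^ j)
        (Mij 𝕜 L (cent 𝕜 L {a, b}) e f i j) = cent 𝕜 L {e, f} ⊓ gpq 𝕜 L a b i j) :
    limE 𝕜 L e (cent 𝕜 L {a, b}) = posPart 𝕜 L a (cent 𝕜 L {e, b}) ∧
    limE 𝕜 L e (cent 𝕜 L {f, a, b}) = posPart 𝕜 L a (cent 𝕜 L {f, e, b}) := by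
  have hfe : ⁅f, e⁆ = 0 := by rw [← lie_skew, hef, neg_zero]
  have hEpow : ∀ (i : ℕ) (x : L), ⁅e, ((ad 𝕜 L e) ^ i) x⁆ = ((ad 𝕜 L e) ^ (i + 1)) x := by
    intro i x; rw [pow_succ', Module.End.mul_apply, ad_apply]
  have hFpow : ∀ (j : ℕ) (y : L), ⁅f, ((ad 𝕜 L f) ^ j) y⁆ = ((ad 𝕜 L f) ^ (j + 1)) y := by
    intro j y; rw [pow_succ', Module.End.mul_apply, ad_apply]
  have mem_gp : ∀ (x : L) (i : ℕ), ⁅a, x⁆ = (i : 𝕜) • x → x ∈ gp 𝕜 L a i := by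
    intro x i hx
    simp only [gp, Module.End.mem_eigenspace_iff, ad_apply, hx, Rat.cast_natCast]
  have mem_gpq : ∀ (x : L) (i j : ℕ), ⁅a, x⁆ = (i : 𝕜) • x → ⁅b, x⁆ = (j : 𝕜) • x →
      x ∈ gpq 𝕜 L a b i j := by
    intro x i j hxa hxb
    simp [gpq, Submodule.mem_inf, Module.End.mem_eigenspace_iff, ad_apply, hxa, hxb,
      Rat.cast_natCast]
  have of_gp : ∀ (x : L) (i : ℕ), x ∈ gp 𝕜 L a i → ⁅a, x⁆ = (i : 𝕜) • x := by
    intro x i hx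
    simp only [gp, Module.End.mem_eigenspace_iff, ad_apply, Rat.cast_natCast] at hx
    exact hx
  -- forward inclusions
  have fwd1 : ∀ i : ℕ,
      Submodule.map ((ad 𝕜 L e) ^ i)
          (cent 𝕜 L {a, b} ⊓ LinearMap.ker ((ad 𝕜 L e) ^ (i + 1)))
        ≤ cent 𝕜 L {e, b} ⊓ gp 𝕜 L a i := by
    intro i y hy
    rw [Submodule.mem_map] at hy
    obtain ⟨x, hx, rfl⟩ := hy
    obtain ⟨hxc, hxk⟩ := Submodule.mem_inf.mp hx
    rw [LinearMap.mem_ker] at hxk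
    obtain ⟨hxa, hxb⟩ := mem_cent_pair.mp hxc
    refine Submodule.mem_inf.mpr ⟨mem_cent_pair.mpr ⟨?_, ?_⟩, ?_⟩
    · rw [hEpow, hxk]
    · rw [lie_ad_pow hbe, hxb, map_zero]
    · apply mem_gp
      have := lie_ad_pow_weight hae i x (0 : 𝕜) (by rw [hxa, zero_smul])
      rwa [zero_add] at this
  have fwd2 : ∀ i : ℕ,
      Submodule.map ((ad 𝕜 L e) ^ i)
          (cent 𝕜 L {f, a, b} ⊓ LinearMap.ker ((ad 𝕜 L e) ^ (i + 1)))
        ≤ cent 𝕜 L {f, e, b} ⊓ gp 𝕜 L a i := by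
    intro i y hy
    rw [Submodule.mem_map] at hy
    obtain ⟨x, hx, rfl⟩ := hy
    obtain ⟨hxc, hxk⟩ := Submodule.mem_inf.mp hx
    rw [LinearMap.mem_ker] at hxk
    obtain ⟨hxf, hxa, hxb⟩ := mem_cent_triple.mp hxc
    refine Submodule.mem_inf.mpr ⟨mem_cent_triple.mpr ⟨?_, ?_, ?_⟩, ?_⟩
    · rw [lie_ad_pow hfe, hxf, map_zero]
    · rw [hEpow, hxk]
    · rw [lie_ad_pow hbe, hxb, map_zero]
    · apply mem_gp
      have := lie_ad_pow_weight hae i x (0 : 𝕜) (by rw [hxa, zero_smul])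
      rwa [zero_add] at this
  -- backward inclusion for part 2
  have bwd2 : ∀ i : ℕ,
      cent 𝕜 L {f, e, b} ⊓ gp 𝕜 L a i
        ≤ Submodule.map ((ad 𝕜 L e) ^ i)
            (cent 𝕜 L {f, a, b} ⊓ LinearMap.ker ((ad 𝕜 L e) ^ (i + 1))) := by
    intro i y hy
    obtain ⟨hyc, hyg⟩ := Submodule.mem_inf.mp hy
    obtain ⟨hyf, hye, hyb⟩ := mem_cent_triple.mp hyc
    have hya : ⁅a, y⁆ = (i : 𝕜) • y := of_gp y i hyg
    have hmem : y ∈ cent 𝕜 L {e, f} ⊓ gpq 𝕜 L a b (i : ℚ) (((0 : ℕ) : ℚ)) := by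
      refine Submodule.mem_inf.mpr ⟨mem_cent_pair.mpr ⟨hye, hyf⟩, mem_gpq y i 0 hya ?_⟩
      rw [hyb, Nat.cast_zero, zero_smul]
    rw [← hw i 0, Submodule.mem_map] at hmem
    obtain ⟨z, hz, hzy⟩ := hmem
    obtain ⟨hz12, hzk2⟩ := Submodule.mem_inf.mp hz
    obtain ⟨hzc, hzk1⟩ := Submodule.mem_inf.mp hz12
    rw [LinearMap.mem_ker] at hzk2
    obtain ⟨hza, hzb⟩ := mem_cent_pair.mp hzc
    rw [Submodule.mem_map]
    refine ⟨z, Submodule.mem_inf.mpr ⟨mem_cent_triple.mpr ⟨?_, hza, hzb⟩, hzk1⟩, ?_⟩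
    · rw [zero_add, pow_one] at hzk2
      rw [← ad_apply (R := 𝕜), hzk2]
    · rwa [pow_zero, mul_one] at hzy
  -- backward inclusion for part 1 (the main induction)
  obtain ⟨N, hN⟩ := hfnil
  have claim : ∀ m : ℕ, ∀ i : ℕ, ∀ y : L, ((ad 𝕜 L f) ^ m) y = 0 →
      ⁅e, y⁆ = 0 → ⁅b, y⁆ = 0 → ⁅a, y⁆ = (i : 𝕜) • y →
      y ∈ limE 𝕜 L e (cent 𝕜 L {a, b}) := by
    intro m
    induction m with
    | zero =>
      intro i y h0 _ _ _
      rw [pow_zero, Module.End.one_apply] at h0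
      rw [h0]
      exact zero_mem _
    | succ m ih =>
      intro i y hym hye hyb hya
      have hwe : ⁅e, ((ad 𝕜 L f) ^ m) y⁆ = 0 := by rw [lie_ad_pow hef, hye, map_zero]
      have hwf : ⁅f, ((ad 𝕜 L f) ^ m) y⁆ = 0 := by rw [hFpow, hym]
      have hwa : ⁅a, ((ad 𝕜 L f) ^ m) y⁆ = (i : 𝕜) • ((ad 𝕜 L f) ^ m) y := by
        rw [lie_ad_pow haf, hya, map_smul]
      have hwb : ⁅b, ((ad 𝕜 L f) ^ m) y⁆ = (m : 𝕜) • ((ad 𝕜 L f) ^ m) y := by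
        have := lie_ad_pow_weight hbf m y (0 : 𝕜) (by rw [hyb, zero_smul])
        rwa [zero_add] at this
      have hwmem : ((ad 𝕜 L f) ^ m) y ∈ cent 𝕜 L {e, f} ⊓ gpq 𝕜 L a b i m :=
        Submodule.mem_inf.mpr ⟨mem_cent_pair.mpr ⟨hwe, hwf⟩, mem_gpq _ i m hwa hwb⟩
      rw [← hw i m, Submodule.mem_map] at hwmem
      obtain ⟨z, hz, hzw⟩ := hwmem
      obtain ⟨hz12, hzk2⟩ := Submodule.mem_inf.mp hz
      obtain ⟨hzc, hzk1⟩ := Submodule.mem_inf.mp hz12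
      have hzk1' := LinearMap.mem_ker.mp hzk1
      have hzk2' := LinearMap.mem_ker.mp hzk2
      obtain ⟨hza, hzb⟩ := mem_cent_pair.mp hzc
      -- y' := y - (ad e)^i z
      have hcomm : ((ad 𝕜 L f) ^ m) (((ad 𝕜 L e) ^ i) z) = ((ad 𝕜 L f) ^ m) y := by
        have h4 := ((commute_ad (𝕜 := 𝕜) hef).pow_pow i m).eq
        calc ((ad 𝕜 L f) ^ m) (((ad 𝕜 L e) ^ i) z)
            = ((ad 𝕜 L f) ^ m * (ad 𝕜 L e) ^ i) z := rfl
          _ = ((ad 𝕜 L e) ^ i * (ad 𝕜 L f) ^ m) z := by rw [h4]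
          _ = ((ad 𝕜 L f) ^ m) y := hzw
      have hy'm : ((ad 𝕜 L f) ^ m) (y - ((ad 𝕜 L e) ^ i) z) = 0 := by
        rw [map_sub, hcomm, sub_self]
      have hy'e : ⁅e, y - ((ad 𝕜 L e) ^ i) z⁆ = 0 := by
        rw [lie_sub, hye, hEpow, hzk1', sub_self]
      have hy'b : ⁅b, y - ((ad 𝕜 L e) ^ i) z⁆ = 0 := by
        rw [lie_sub, hyb, lie_ad_pow hbe, hzb, map_zero, sub_self]
      have hy'a : ⁅a, y - ((ad 𝕜 L e) ^ i) z⁆ = (i : 𝕜) • (y - ((ad 𝕜 L e) ^ i) z) := by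
        have hz_w := lie_ad_pow_weight hae i z (0 : 𝕜) (by rw [hza, zero_smul])
        rw [zero_add] at hz_w
        rw [lie_sub, hya, hz_w, smul_sub]
      have hmem1 : y - ((ad 𝕜 L e) ^ i) z ∈ limE 𝕜 L e (cent 𝕜 L {a, b}) :=
        ih i _ hy'm hy'e hy'b hy'a
      have hmem2 : ((ad 𝕜 L e) ^ i) z ∈ limE 𝕜 L e (cent 𝕜 L {a, b}) := by
        apply Submodule.mem_iSup_of_mem i
        exact Submodule.mem_map_of_mem (Submodule.mem_inf.mpr ⟨hzc, hzk1⟩)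
      have := Submodule.add_mem _ hmem1 hmem2
      rwa [sub_add_cancel] at this
  have bwd1 : ∀ i : ℕ,
      cent 𝕜 L {e, b} ⊓ gp 𝕜 L a i ≤ limE 𝕜 L e (cent 𝕜 L {a, b}) := by
    intro i y hy
    obtain ⟨hyc, hyg⟩ := Submodule.mem_inf.mp hy
    obtain ⟨hye, hyb⟩ := mem_cent_pair.mp hyc
    exact claim N i y (by rw [hN]; rfl) hye hyb (of_gp y i hyg)
  constructor
  · apply le_antisymm
    · apply iSup_le
      intro i
      exact (fwd1 i).trans (le_iSup (fun i : ℕ => cent 𝕜 L {e, b} ⊓ gp 𝕜 L a i) i)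
    · exact iSup_le fun i => bwd1 i
  · apply le_antisymm
    · apply iSup_le
      intro i
      exact (fwd2 i).trans (le_iSup (fun i : ℕ => cent 𝕜 L {f, e, b} ⊓ gp 𝕜 L a i) i)
    · apply iSup_le
      intro i
      exact (bwd2 i).trans
        (le_iSup (fun i : ℕ =>
          Submodule.map ((ad 𝕜 L e) ^ i)
            (cent 𝕜 L {f, a, b} ⊓ LinearMap.ker ((ad 𝕜 L e) ^ (i + 1)))) i)

end Aux

section Statement6

variable (𝕜 : Type*) [Field 𝕜] [IsAlgClosed 𝕜] [CharZero 𝕜]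
variable (L : Type*) [LieRing L] [LieAlgebra 𝕜 L] [Module.Finite 𝕜 L]
  [LieAlgebra.IsSemisimple 𝕜 L]

/-- Proposition 2.4. For a wonderful pair:
(1) `lim_{e₁} 𝔥 = 𝔷_𝔤(e₁,h₂)_ℙ` and `lim_{e₂} 𝔥 = 𝔷_𝔤(e₂,h₁)_ℙ`;
(2) `lim_{e₁} 𝔷_𝔤(e₂,h₁,h₂) = 𝔷_𝔤(e₂,e₁,h₂)_ℙ` and
    `lim_{e₂} 𝔷_𝔤(e₁,h₁,h₂) = 𝔷_𝔤(e₁,e₂,h₁)_ℙ`. -/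
theorem statement6 (e₁ e₂ h₁ h₂ : L)
    (hnp : IsNilpotentPair 𝕜 L e₁ e₂) (hch : IsCharacteristic 𝕜 L e₁ e₂ h₁ h₂)
    (hw : IsWonderful 𝕜 L e₁ e₂ h₁ h₂) :
    (limE 𝕜 L e₁ (cent 𝕜 L {h₁, h₂}) = posPart 𝕜 L h₁ (cent 𝕜 L {e₁, h₂}) ∧
     limE 𝕜 L e₂ (cent 𝕜 L {h₁, h₂}) = posPart 𝕜 L h₂ (cent 𝕜 L {e₂, h₁})) ∧
    (limE 𝕜 L e₁ (cent 𝕜 L {e₂, h₁, h₂}) = posPart 𝕜 L h₁ (cent 𝕜 L {e₂, e₁, h₂}) ∧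
     limE 𝕜 L e₂ (cent 𝕜 L {e₁, h₁, h₂}) = posPart 𝕜 L h₂ (cent 𝕜 L {e₁, e₂, h₁})) := by
  obtain ⟨hef, -⟩ := hnp
  obtain ⟨-, -, -, h11, h22, h12, h21, -⟩ := hch
  have hfe : ⁅e₂, e₁⁆ = 0 := by rw [← lie_skew, hef, neg_zero]
  have nil₁ : IsNilpotent (ad 𝕜 L e₁) := isNilpotent_ad_of_lie_eq h₁ e₁ h11
  have nil₂ : IsNilpotent (ad 𝕜 L e₂) := isNilpotent_ad_of_lie_eq h₂ e₂ h22
  have hw' : ∀ i j : ℕ, Submodule.map ((ad 𝕜 L e₂) ^ i * (ad 𝕜 L e₁) ^ j)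
      (Mij 𝕜 L (cent 𝕜 L {h₂, h₁}) e₂ e₁ i j) = cent 𝕜 L {e₂, e₁} ⊓ gpq 𝕜 L h₂ h₁ i j := by
    intro i j
    have hcomm : (ad 𝕜 L e₂) ^ i * (ad 𝕜 L e₁) ^ j = (ad 𝕜 L e₁) ^ j * (ad 𝕜 L e₂) ^ i :=
      (((commute_ad (𝕜 := 𝕜) hef).pow_pow j i).eq).symm
    have hM : Mij 𝕜 L (cent 𝕜 L {h₂, h₁}) e₂ e₁ i j
        = Mij 𝕜 L (cent 𝕜 L {h₁, h₂}) e₁ e₂ j i := by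
      simp only [Mij, Set.pair_comm h₂ h₁]
      rw [inf_right_comm]
    have hgpq : gpq 𝕜 L h₂ h₁ (i : ℚ) (j : ℚ) = gpq 𝕜 L h₁ h₂ (j : ℚ) (i : ℚ) := by
      simp only [gpq]
      rw [inf_comm]
    rw [hcomm, hM, hgpq, Set.pair_comm e₂ e₁, hw j i]
  have key1 := key_lemma e₁ e₂ h₁ h₂ hef h11 h22 h12 h21 nil₂ hw
  have key2 := key_lemma e₂ e₁ h₂ h₁ hfe h22 h11 h21 h12 nil₁ hw'
  have hset1 : ({h₂, h₁} : Set L) = {h₁, h₂} := Set.pair_comm h₂ h₁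
  rw [hset1] at key2
  exact ⟨⟨key1.1, key2.1⟩, ⟨key1.2, key2.2⟩⟩

end Statement6
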